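/- Let G be a connected (n,k,λ,μ)-strongly regular graph that is not complete (there exist two distinct non-adjacent vertices), and let L be its Laplacian matrix regarded as a real symmetric matrix. Then there exist real numbers θ₁, θ₂ with θ₁ ≠ θ₂, θ₁ ≠ 0, θ₂ ≠ 0, θ₁·θ₂ = n·μ, and the set of eigenvalues of L is exactly {0, θ₁, θ₂}. -/

import Mathlib

open Finset

namespace SRGAux

open Matrix

variable {V : Type*} [Fintype V] [DecidableEq V] (G : SimpleGraph V) [DecidableRel G.Adj]
  {n k l μ : ℕ}

/-- The all-ones matrix. -/
def Jmat (V : Type*) : Matrix V V ℝ := Matrix.of fun _ _ => (1 : ℝ)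

lemma degMatrix_srg (hsrg : G.IsSRGWith n k l μ) :
    G.degMatrix ℝ = (k : ℝ) • 1 := by
  ext i j
  by_cases h : i = j <;>
    simp [SimpleGraph.degMatrix, Matrix.diagonal, h, hsrg.regular i, hsrg.regular j,
      Matrix.one_apply]

lemma compl_adjMatrix_eq : Gᶜ.adjMatrix ℝ = Jmat V - 1 - G.adjMatrix ℝ := by
  ext i j
  by_cases h : i = j
  · simp [Jmat, h, Matrix.one_apply]
  · by_cases ha : G.Adj i j <;>
      simp [Jmat, h, ha, Matrix.one_apply, Ne.symm, SimpleGraph.compl_adj]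

lemma key_matrix_eq (hsrg : G.IsSRGWith n k l μ) :
    G.lapMatrix ℝ * G.lapMatrix ℝ
      - ((2 * k : ℝ) - l + μ) • G.lapMatrix ℝ
      + ((k : ℝ) ^ 2 - l * k + μ * k - k + μ) • 1
      = (μ : ℝ) • Jmat V := by
  have hA2 : G.adjMatrix ℝ * G.adjMatrix ℝ
      = (k : ℝ) • 1 + (l : ℝ) • G.adjMatrix ℝ + (μ : ℝ) • Gᶜ.adjMatrix ℝ := by
    have := hsrg.matrix_eq (α := ℝ)
    rw [pow_two] at this
    simpa [Nat.cast_smul_eq_nsmul] using this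
  have hL : G.lapMatrix ℝ = (k : ℝ) • 1 - G.adjMatrix ℝ := by
    rw [SimpleGraph.lapMatrix, degMatrix_srg G hsrg]
  rw [compl_adjMatrix_eq] at hA2
  rw [hL]
  simp only [sub_mul, mul_sub, smul_mul_assoc, mul_smul_comm, one_mul, mul_one]
  rw [hA2]
  module

lemma trace_lap (hsrg : G.IsSRGWith n k l μ) :
    (G.lapMatrix ℝ).trace = (Fintype.card V : ℝ) * k := by
  rw [SimpleGraph.lapMatrix, trace_sub, SimpleGraph.trace_adjMatrix, degMatrix_srg G hsrg,
    trace_smul, trace_one]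
  simp [mul_comm]

lemma trace_lap_sq (hsrg : G.IsSRGWith n k l μ) :
    (G.lapMatrix ℝ * G.lapMatrix ℝ).trace
      = (Fintype.card V : ℝ) * k ^ 2 + (Fintype.card V : ℝ) * k := by
  have hA2 : G.adjMatrix ℝ * G.adjMatrix ℝ
      = (k : ℝ) • 1 + (l : ℝ) • G.adjMatrix ℝ + (μ : ℝ) • Gᶜ.adjMatrix ℝ := by
    have := hsrg.matrix_eq (α := ℝ)
    rw [pow_two] at this
    simpa [Nat.cast_smul_eq_nsmul] using this
  have hL : G.lapMatrix ℝ = (k : ℝ) • 1 - G.adjMatrix ℝ := by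
    rw [SimpleGraph.lapMatrix, degMatrix_srg G hsrg]
  rw [hL]
  simp only [sub_mul, mul_sub, smul_mul_assoc, mul_smul_comm, one_mul, mul_one, hA2]
  have hexp : (k:ℝ) • ((k:ℝ) • (1:Matrix V V ℝ) - G.adjMatrix ℝ)
      - ((k:ℝ) • G.adjMatrix ℝ - ((k:ℝ) • 1 + (l:ℝ) • G.adjMatrix ℝ
        + (μ:ℝ) • Gᶜ.adjMatrix ℝ))
      = ((k:ℝ)^2 + (k:ℝ)) • (1 : Matrix V V ℝ) + ((l:ℝ) - 2*k) • G.adjMatrix ℝ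
        + (μ:ℝ) • Gᶜ.adjMatrix ℝ := by
    module
  rw [hexp]
  simp only [trace_add, trace_smul, trace_one, SimpleGraph.trace_adjMatrix, smul_eq_mul,
    mul_zero, add_zero, smul_zero]
  ring

lemma lap_col_sum (m : V) : ∑ j, G.lapMatrix ℝ j m = 0 := by
  have h0 := congrFun (G.lapMatrix_mulVec_const_eq_zero (R := ℝ)) m
  have hsym := G.isSymm_lapMatrix (R := ℝ)
  calc ∑ j, G.lapMatrix ℝ j m = ∑ j, G.lapMatrix ℝ m j :=
        Finset.sum_congr rfl fun j _ => (hsym.apply j m).symm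
      _ = 0 := by simpa [Matrix.mulVec, dotProduct] using h0

lemma eig_vec_sum_zero (hherm : (G.lapMatrix ℝ).IsHermitian) (i : V)
    (hne : hherm.eigenvalues i ≠ 0) :
    ∑ j, (hherm.eigenvectorBasis i) j = 0 := by
  have hmv := hherm.mulVec_eigenvectorBasis i
  have h1 : ∑ m, (G.lapMatrix ℝ *ᵥ ⇑(hherm.eigenvectorBasis i)) m
      = ∑ m, (∑ j, G.lapMatrix ℝ m j * (hherm.eigenvectorBasis i) j) := by
    simp [Matrix.mulVec, dotProduct]
  have h2 : ∑ m, (∑ j, G.lapMatrix ℝ m j * (hherm.eigenvectorBasis i) j)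
      = ∑ j, (∑ m, G.lapMatrix ℝ m j) * (hherm.eigenvectorBasis i) j := by
    rw [Finset.sum_comm]
    simp [Finset.sum_mul]
  have h3 : ∑ m, (G.lapMatrix ℝ *ᵥ ⇑(hherm.eigenvectorBasis i)) m = 0 := by
    rw [h1, h2]
    simp [lap_col_sum]
  rw [hmv] at h3
  simp only [Pi.smul_apply, smul_eq_mul, ← Finset.mul_sum] at h3
  exact (mul_eq_zero.mp h3).resolve_left hne

lemma eig_quadratic (hkey : G.lapMatrix ℝ * G.lapMatrix ℝ
      - ((2 * k : ℝ) - l + μ) • G.lapMatrix ℝ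
      + ((k : ℝ) ^ 2 - l * k + μ * k - k + μ) • 1
      = (μ : ℝ) • Jmat V)
    (hherm : (G.lapMatrix ℝ).IsHermitian) (i : V)
    (hne : hherm.eigenvalues i ≠ 0) :
    (hherm.eigenvalues i) ^ 2 - ((2 * k : ℝ) - l + μ) * hherm.eigenvalues i
      + ((k : ℝ) ^ 2 - l * k + μ * k - k + μ) = 0 := by
  set v : V → ℝ := ⇑(hherm.eigenvectorBasis i) with hv
  set e : ℝ := hherm.eigenvalues i
  have hmv : G.lapMatrix ℝ *ᵥ v = e • v := hherm.mulVec_eigenvectorBasis i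
  have hvne : v ≠ 0 := by
    intro h0
    have hb : hherm.eigenvectorBasis i ≠ 0 := hherm.eigenvectorBasis.orthonormal.ne_zero i
    apply hb
    ext m
    exact congrFun h0 m
  have hJ : Jmat V *ᵥ v = 0 := by
    ext m
    simp only [Jmat, Matrix.mulVec, dotProduct, Matrix.of_apply, one_mul,
      Pi.zero_apply]
    exact eig_vec_sum_zero G hherm i hne
  have happ := congrArg (fun M => M *ᵥ v) hkey
  simp only [Matrix.add_mulVec, Matrix.sub_mulVec, Matrix.smul_mulVec,
    Matrix.one_mulVec, ← Matrix.mulVec_mulVec, hmv, Matrix.mulVec_smul, hJ,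
    smul_zero] at happ
  have : (e ^ 2 - ((2 * k : ℝ) - l + μ) * e + ((k : ℝ) ^ 2 - l * k + μ * k - k + μ)) • v
      = 0 := by
    rw [← happ]
    ext m
    simp [smul_smul]
    ring
  rcases smul_eq_zero.mp this with h | h
  · exact h
  · exact absurd h hvne

lemma herm_sum_eigs {m : Type*} [Fintype m] [DecidableEq m] {A : Matrix m m ℝ}
    (hA : A.IsHermitian) : ∑ i, hA.eigenvalues i = A.trace := by
  conv_rhs => rw [hA.spectral_theorem, Unitary.conjStarAlgAut_apply]
  rw [trace_mul_cycle,
    show (star (hA.eigenvectorUnitary : Matrix m m ℝ)) * hA.eigenvectorUnitary = 1 from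
      (mem_unitaryGroup_iff').mp hA.eigenvectorUnitary.2, one_mul, trace_diagonal]
  simp

lemma herm_sum_sq_eigs {m : Type*} [Fintype m] [DecidableEq m] {A : Matrix m m ℝ}
    (hA : A.IsHermitian) : ∑ i, (hA.eigenvalues i) ^ 2 = (A * A).trace := by
  have hU : (star (hA.eigenvectorUnitary : Matrix m m ℝ)) * hA.eigenvectorUnitary = 1 :=
    (mem_unitaryGroup_iff').mp hA.eigenvectorUnitary.2
  have hsq : A * A = (hA.eigenvectorUnitary : Matrix m m ℝ)
      * (diagonal (RCLike.ofReal ∘ hA.eigenvalues) * diagonal (RCLike.ofReal ∘ hA.eigenvalues))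
      * (star (hA.eigenvectorUnitary : Matrix m m ℝ)) := by
    conv_lhs => rw [hA.spectral_theorem, Unitary.conjStarAlgAut_apply]
    simp only [mul_assoc]
    rw [← mul_assoc (star (hA.eigenvectorUnitary : Matrix m m ℝ)), hU, one_mul]
  rw [hsq, trace_mul_cycle, ← mul_assoc, hU, one_mul, diagonal_mul_diagonal, trace_diagonal]
  simp [pow_two]

lemma card_nonzero_eigs (hconn : G.Connected) (hherm : (G.lapMatrix ℝ).IsHermitian) :
    Fintype.card {i // hherm.eigenvalues i ≠ 0} = Fintype.card V - 1 := by
  have hne : Nonempty V := hconn.nonempty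
  have hcc : Fintype.card G.ConnectedComponent = 1 := by
    have h1 : Subsingleton G.ConnectedComponent :=
      hconn.preconnected.subsingleton_connectedComponent
    have h2 : Nonempty G.ConnectedComponent :=
      ⟨G.connectedComponentMk (Classical.arbitrary V)⟩
    exact Nat.le_antisymm (Fintype.card_le_one_iff_subsingleton.mpr h1)
      (Fintype.card_pos_iff.mpr h2)
  have hker : Module.finrank ℝ (LinearMap.ker (G.lapMatrix ℝ).mulVecLin) = 1 := by
    have heq : (G.lapMatrix ℝ).mulVecLin = Matrix.toLin' (G.lapMatrix ℝ) :=
      LinearMap.ext fun x => by simp [Matrix.toLin'_apply, Matrix.mulVecLin_apply]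
    rw [heq, ← G.card_connectedComponent_eq_finrank_ker_toLin'_lapMatrix, hcc]
  have hrn := LinearMap.finrank_range_add_finrank_ker ((G.lapMatrix ℝ).mulVecLin)
  rw [hker, Module.finrank_fintype_fun_eq_card] at hrn
  have hrank : (G.lapMatrix ℝ).rank = Fintype.card V - 1 := by
    have : (G.lapMatrix ℝ).rank
        = Module.finrank ℝ (LinearMap.range (G.lapMatrix ℝ).mulVecLin) := rfl
    omega
  rw [← hherm.rank_eq_card_non_zero_eigs, hrank]

lemma card_zero_eigs (hconn : G.Connected) (hherm : (G.lapMatrix ℝ).IsHermitian) :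
    Fintype.card {i // hherm.eigenvalues i = 0} = 1 := by
  have h1 := card_nonzero_eigs G hconn hherm
  have h2 : Fintype.card {i // hherm.eigenvalues i ≠ 0}
      = Fintype.card V - Fintype.card {i // hherm.eigenvalues i = 0} :=
    Fintype.card_subtype_compl _
  have h3 : Fintype.card {i // hherm.eigenvalues i = 0} ≤ Fintype.card V :=
    Fintype.card_subtype_le _
  have h4 : 1 ≤ Fintype.card V := Fintype.card_pos_iff.mpr hconn.nonempty
  omega

end SRGAux

theorem stmt13 {V : Type*} [Fintype V] [DecidableEq V] (G : SimpleGraph V)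
    [DecidableRel G.Adj] {n k l μ : ℕ}
    (hsrg : G.IsSRGWith n k l μ) (hconn : G.Connected)
    (hnotcomplete : ∃ x y : V, x ≠ y ∧ ¬G.Adj x y)
    (hherm : (G.lapMatrix ℝ).IsHermitian) :
    ∃ θ₁ θ₂ : ℝ, θ₁ ≠ θ₂ ∧ θ₁ ≠ 0 ∧ θ₂ ≠ 0 ∧ θ₁ * θ₂ = (n * μ : ℕ) ∧
      Set.range hherm.eigenvalues = {0, θ₁, θ₂} := by
  classical
  obtain ⟨x0, y0, hxy, hnadj⟩ := hnotcomplete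
  set E : V → ℝ := hherm.eigenvalues with hE
  set N : ℕ := Fintype.card V with hN
  set p : ℝ := (2 * k : ℝ) - l + μ with hp
  set q : ℝ := (k : ℝ) ^ 2 - l * k + μ * k - k + μ with hq
  -- basic facts
  have hNn : N = n := hsrg.card
  have hkpos : 0 < k := by
    obtain ⟨w⟩ := hconn x0 y0
    cases w with
    | nil => exact absurd rfl hxy
    | cons h _ =>
      have : 0 < G.degree x0 := by
        rw [G.degree_pos_iff_exists_adj x0]
        exact ⟨_, h⟩
      rwa [hsrg.regular x0] at this
  have hNpos : 0 < N := Fintype.card_pos_iff.mpr hconn.nonempty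
  -- quadratic satisfied by nonzero eigenvalues
  have hkey := SRGAux.key_matrix_eq G hsrg
  have hquad : ∀ i, E i ≠ 0 → E i ^ 2 - p * E i + q = 0 := fun i hi =>
    SRGAux.eig_quadratic G hkey hherm i hi
  -- trace identities
  have hsum : ∑ i, E i = (N : ℝ) * k := by
    rw [hE, SRGAux.herm_sum_eigs hherm, SRGAux.trace_lap G hsrg]
  have hsumsq : ∑ i, E i ^ 2 = (N : ℝ) * k ^ 2 + (N : ℝ) * k := by
    rw [hE, SRGAux.herm_sum_sq_eigs hherm, SRGAux.trace_lap_sq G hsrg]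
  -- the zero / nonzero index sets
  set Z : Finset V := Finset.univ.filter (fun i => E i = 0) with hZ
  set NZ : Finset V := Finset.univ.filter (fun i => ¬ E i = 0) with hNZ
  have hZcard : Z.card = 1 := by
    have := SRGAux.card_zero_eigs G hconn hherm
    rwa [Fintype.card_subtype] at this
  have hNZcard : NZ.card = N - 1 := by
    have := SRGAux.card_nonzero_eigs G hconn hherm
    rwa [Fintype.card_subtype] at this
  have hsplit := Finset.sum_filter_add_sum_filter_not Finset.univ (fun i => E i = 0) E
  have hsplitsq := Finset.sum_filter_add_sum_filter_not Finset.univ (fun i => E i = 0)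
    (fun i => E i ^ 2)
  have hZsum : ∑ i ∈ Z, E i = 0 :=
    Finset.sum_eq_zero fun i hi => (Finset.mem_filter.mp hi).2
  have hZsumsq : ∑ i ∈ Z, E i ^ 2 = 0 :=
    Finset.sum_eq_zero fun i hi => by rw [(Finset.mem_filter.mp hi).2]; ring
  have hNZsum : ∑ i ∈ NZ, E i = (N : ℝ) * k := by
    rw [← hsum, ← hsplit, hZsum, zero_add]
  have hNZsumsq : ∑ i ∈ NZ, E i ^ 2 = (N : ℝ) * k ^ 2 + (N : ℝ) * k := by
    rw [← hsumsq, ← hsplitsq, hZsumsq, zero_add]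
  -- q = N * μ
  have hNZquad : ∑ i ∈ NZ, (E i ^ 2 - p * E i + q) = 0 :=
    Finset.sum_eq_zero fun i hi => hquad i (Finset.mem_filter.mp hi).2
  have hcardcast : ((NZ.card : ℝ)) = (N : ℝ) - 1 := by
    rw [hNZcard]
    push_cast [Nat.cast_sub hNpos]
    ring
  have hqN : q = (N : ℝ) * μ := by
    have hexp : ∑ i ∈ NZ, (E i ^ 2 - p * E i + q)
        = (∑ i ∈ NZ, E i ^ 2) - p * (∑ i ∈ NZ, E i) + NZ.card * q := by
      rw [Finset.sum_add_distrib, Finset.sum_sub_distrib, ← Finset.mul_sum]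
      simp [Finset.sum_const, nsmul_eq_mul]
    rw [hexp, hNZsum, hNZsumsq, hcardcast] at hNZquad
    rw [hq] at hNZquad ⊢
    rw [hp] at hNZquad
    linear_combination -hNZquad
  -- there are at least 3 vertices
  have hN3 : 3 ≤ N := by
    obtain ⟨z, hz⟩ := Finset.card_pos.mp
      (by rw [SimpleGraph.card_neighborFinset_eq_degree, hsrg.regular x0]; exact hkpos :
      0 < (G.neighborFinset x0).card)
    rw [SimpleGraph.mem_neighborFinset] at hz
    have hzx : z ≠ x0 := fun h => G.irrefl (h ▸ hz)
    have hzy : z ≠ y0 := fun h => hnadj (h ▸ hz)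
    have hc3 : ({x0, y0, z} : Finset V).card = 3 := by
      rw [Finset.card_insert_of_notMem (by simp [hxy, (Ne.symm hzx)]),
        Finset.card_insert_of_notMem (by simp [(Ne.symm hzy)]), Finset.card_singleton]
    calc 3 = ({x0, y0, z} : Finset V).card := hc3.symm
      _ ≤ N := Finset.card_le_univ _
  have hNk : ((N : ℝ)) * k ≠ 0 := by
    have h1 : (0:ℝ) < (N:ℝ) := by exact_mod_cast hNpos
    have h2 : (0:ℝ) < (k:ℝ) := by exact_mod_cast hkpos
    positivity
  -- two distinct nonzero eigenvalues exist
  have hdistinct : ∃ i₁ ∈ NZ, ∃ i₂ ∈ NZ, E i₁ ≠ E i₂ := by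
    by_contra hall
    push_neg at hall
    obtain ⟨i₁, hi₁⟩ := Finset.card_pos.mp (by omega : 0 < NZ.card)
    set θ : ℝ := E i₁ with hθ
    have hconst : ∀ i ∈ NZ, E i = θ := fun i hi => hall i hi i₁ hi₁
    have hs1 : ((N : ℝ) - 1) * θ = (N : ℝ) * k := by
      rw [← hNZsum, Finset.sum_congr rfl hconst]
      simp [Finset.sum_const, nsmul_eq_mul, hcardcast]
    have hs2 : ((N : ℝ) - 1) * θ ^ 2 = (N : ℝ) * k ^ 2 + (N : ℝ) * k := by
      rw [← hNZsumsq, Finset.sum_congr rfl fun i hi => by rw [hconst i hi]]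
      simp [Finset.sum_const, nsmul_eq_mul, hcardcast]
    have h4 : (N : ℝ) * k * θ = (N : ℝ) * k ^ 2 + (N : ℝ) * k := by
      linear_combination hs2 - θ * hs1
    have hθval : θ = (k : ℝ) + 1 := by
      apply mul_left_cancel₀ hNk
      rw [h4]; ring
    rw [hθval] at hs1
    have hNR : (N : ℝ) = (k : ℝ) + 1 := by linear_combination hs1
    have hNnat : N = k + 1 := by exact_mod_cast hNR
    -- the graph would be complete, contradiction
    have hdeg : G.degree x0 = N - 1 := by rw [hsrg.regular x0]; omega
    have hsub : G.neighborFinset x0 ⊆ Finset.univ.erase x0 := by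
      intro z hz
      rw [SimpleGraph.mem_neighborFinset] at hz
      exact Finset.mem_erase.mpr ⟨fun h => G.irrefl (h ▸ hz), Finset.mem_univ _⟩
    have heq : G.neighborFinset x0 = Finset.univ.erase x0 := by
      apply Finset.eq_of_subset_of_card_le hsub
      rw [Finset.card_erase_of_mem (Finset.mem_univ _),
        SimpleGraph.card_neighborFinset_eq_degree, hdeg, Finset.card_univ]
    have : y0 ∈ G.neighborFinset x0 := by
      rw [heq]
      exact Finset.mem_erase.mpr ⟨Ne.symm hxy, Finset.mem_univ _⟩
    exact hnadj ((SimpleGraph.mem_neighborFinset G x0 y0).mp this)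
  obtain ⟨i₁, hi₁, i₂, hi₂, hne12⟩ := hdistinct
  have hθ₁0 : E i₁ ≠ 0 := (Finset.mem_filter.mp hi₁).2
  have hθ₂0 : E i₂ ≠ 0 := (Finset.mem_filter.mp hi₂).2
  have h1 := hquad i₁ hθ₁0
  have h2 := hquad i₂ hθ₂0
  have hpsum : E i₁ + E i₂ = p := by
    have hfac : (E i₁ - E i₂) * (E i₁ + E i₂ - p) = 0 := by linear_combination h1 - h2
    rcases mul_eq_zero.mp hfac with h | h
    · exact absurd (sub_eq_zero.mp h) hne12
    · have := sub_eq_zero.mp h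
      linarith
  have hprod : E i₁ * E i₂ = q := by
    linear_combination (E i₁) * hpsum - h1
  refine ⟨E i₁, E i₂, hne12, hθ₁0, hθ₂0, ?_, ?_⟩
  · rw [hprod, hqN, hNn]
    push_cast
    ring
  · ext e
    simp only [Set.mem_range, Set.mem_insert_iff, Set.mem_singleton_iff]
    constructor
    · rintro ⟨i, rfl⟩
      by_cases h0 : E i = 0
      · exact Or.inl h0
      · have hfac : (E i - E i₁) * (E i - E i₂) = 0 := by
          linear_combination (hquad i h0) - (E i) * hpsum + hprod
        rcases mul_eq_zero.mp hfac with h | h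
        · exact Or.inr (Or.inl (sub_eq_zero.mp h))
        · exact Or.inr (Or.inr (sub_eq_zero.mp h))
    · rintro (rfl | rfl | rfl)
      · obtain ⟨i0, hi0⟩ := Finset.card_pos.mp (hZcard ▸ one_pos : 0 < Z.card)
        exact ⟨i0, (Finset.mem_filter.mp hi0).2⟩
      · exact ⟨i₁, rfl⟩
      · exact ⟨i₂, rfl⟩
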